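/- For any α_1,...,α_m ∈ [0,1] with mean ᾱ = (1/m)Σ_i α_i > 0, one has ∫_0^1 Π_{i=1}^m (1 - α_i t) dt ≤ 1/((m+1)·ᾱ). -/

import Mathlib

open Finset

/-- AM-GM with equal weights: product ≤ (mean)^m. -/
lemma prod_le_mean_pow (m : ℕ) (hm : 0 < m) (z : Fin m → ℝ) (hz : ∀ i, 0 ≤ z i) :
    ∏ i, z i ≤ ((1 / (m:ℝ)) * ∑ i, z i) ^ m := by
  have hm' : (0:ℝ) < m := by exact_mod_cast hm
  have h := Real.geom_mean_le_arith_mean_weighted Finset.univ (fun _ => 1 / (m:ℝ)) z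
    (fun i _ => by positivity)
    (by simp [Finset.card_univ]; field_simp)
    (fun i _ => hz i)
  have key : (∏ i, z i ^ (1 / (m:ℝ))) ^ m = ∏ i, z i := by
    rw [← Finset.prod_pow]
    refine Finset.prod_congr rfl fun i _ => ?_
    rw [← Real.rpow_natCast (z i ^ (1 / (m:ℝ))) m, ← Real.rpow_mul (hz i)]
    field_simp
    simp
  calc ∏ i, z i = (∏ i, z i ^ (1 / (m:ℝ))) ^ m := key.symm
    _ ≤ ((1 / (m:ℝ)) * ∑ i, z i) ^ m := by
        apply pow_le_pow_left₀
        · exact Finset.prod_nonneg fun i _ => Real.rpow_nonneg (hz i) _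
        · simpa [Finset.mul_sum] using h

/-- For α₁,…,α_m ∈ [0,1] with positive mean ᾱ,
∫_0^1 ∏ᵢ (1-αᵢt) dt ≤ 1/((m+1)·ᾱ). -/
theorem integral_upper_bound (m : ℕ) (hm : 1 ≤ m) (α : Fin m → ℝ)
    (hα : ∀ i, α i ∈ Set.Icc (0:ℝ) 1)
    (ᾱ : ℝ) (hmean : ᾱ = (1 / (m:ℝ)) * ∑ i, α i) (hpos : 0 < ᾱ) :
    (∫ t in (0:ℝ)..1, ∏ i, (1 - α i * t)) ≤ 1 / (((m:ℝ) + 1) * ᾱ) := by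
  have hm' : (0:ℝ) < m := by exact_mod_cast hm
  -- ᾱ ≤ 1
  have hᾱ1 : ᾱ ≤ 1 := by
    have hsum : ∑ i, α i ≤ (m:ℝ) := by
      calc ∑ i, α i ≤ ∑ _i : Fin m, (1:ℝ) :=
            Finset.sum_le_sum fun i _ => (hα i).2
        _ = m := by simp
    rw [hmean, div_mul_eq_mul_div, one_mul, div_le_one hm']
    exact hsum
  -- pointwise bound
  have hpoint : ∀ t ∈ Set.Icc (0:ℝ) 1, (∏ i, (1 - α i * t)) ≤ (1 - ᾱ * t) ^ m := by
    intro t ht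
    have h := prod_le_mean_pow m hm (fun i => 1 - α i * t) (fun i => by
      show (0:ℝ) ≤ 1 - α i * t
      have h1 := (hα i).1; have h2 := (hα i).2
      nlinarith [ht.1, ht.2])
    refine h.trans_eq ?_
    congr 1
    rw [hmean, Finset.sum_sub_distrib, ← Finset.sum_mul]
    simp only [Finset.sum_const, Finset.card_univ, Fintype.card_fin, nsmul_eq_mul, mul_one]
    field_simp
  -- integrability
  have hint1 : IntervalIntegrable (fun t => ∏ i, (1 - α i * t)) MeasureTheory.volume 0 1 := by
    apply Continuous.intervalIntegrable
    exact continuous_finset_prod _ fun i _ => by continuity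
  have hint2 : IntervalIntegrable (fun t => (1 - ᾱ * t) ^ m) MeasureTheory.volume 0 1 := by
    apply Continuous.intervalIntegrable; continuity
  have hmono : (∫ t in (0:ℝ)..1, ∏ i, (1 - α i * t)) ≤ ∫ t in (0:ℝ)..1, (1 - ᾱ * t) ^ m := by
    apply intervalIntegral.integral_mono_on (by norm_num) hint1 hint2
    intro t ht
    exact hpoint t ht
  refine hmono.trans ?_
  -- compute the integral via an antiderivative
  have hderiv : ∀ t ∈ Set.uIcc (0:ℝ) 1,
      HasDerivAt (fun t => -(1 - ᾱ * t) ^ (m+1) / ((m+1) * ᾱ)) ((1 - ᾱ * t) ^ m) t := by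
    intro t _
    have h1 : HasDerivAt (fun t : ℝ => 1 - ᾱ * t) (-ᾱ) t := by
      simpa using ((hasDerivAt_id t).const_mul ᾱ).const_sub 1
    have h2 := (h1.pow (m+1))
    have h3 := h2.div_const ((m+1) * ᾱ)
    have h4 := h3.neg
    convert h4 using 1
    · rfl
    · rfl
    · ext s; simp; ring
    · simp only [Nat.add_sub_cancel]; push_cast; field_simp
  have hcomp : (∫ t in (0:ℝ)..1, (1 - ᾱ * t) ^ m)
      = -(1 - ᾱ * 1) ^ (m+1) / ((m+1) * ᾱ) - (-(1 - ᾱ * 0) ^ (m+1) / ((m+1) * ᾱ)) := by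
    apply intervalIntegral.integral_eq_sub_of_hasDerivAt hderiv hint2
  rw [hcomp]
  have hden : (0:ℝ) < ((m:ℝ) + 1) * ᾱ := by positivity
  have hnn : (0:ℝ) ≤ (1 - ᾱ * 1) ^ (m+1) := by
    apply pow_nonneg; linarith
  rw [div_sub_div_same, div_le_div_iff₀ hden hden]
  simp only [mul_zero, sub_zero, one_pow]
  nlinarith [hden]
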